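/- Let X be a compact subset of a Banach space B with finite box-counting dimension, and let d > d_B(X). Then for every n ∈ ℕ there exist m_n ≤ C·2^{2nd} (for a constant C depending on d) and a bounded linear map φ_n : B → ℝ^{m_n} with operator norm ‖φ_n‖ ≤ √(m_n) such that |φ_n(x − y)| ≥ 2^{−(n+1)} whenever x, y ∈ X satisfy ‖x − y‖ ≥ 2^{−n}. -/

import Mathlib

open Filter Metric Set Pointwise Topology

/-- `coverNum X ε` : minimal number of balls of radius `ε` with centres in `X` covering `X`. -/
noncomputable def coverNum {E : Type*} [SeminormedAddCommGroup E] (X : Set E) (ε : ℝ) : ℕ∞ :=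
  sInf {n : ℕ∞ | ∃ F : Finset E, ↑F ⊆ X ∧ (X ⊆ ⋃ c ∈ F, Metric.ball c ε) ∧ n = F.card}

/-- extended logarithm of an extended natural number. -/
noncomputable def elog (n : ℕ∞) : EReal :=
  if n = ⊤ then ⊤ else ((Real.log n.toNat : ℝ) : EReal)

/-- The upper box-counting dimension `d_B(X) = limsup_{ε → 0⁺} log N(X,ε) / (-log ε)`. -/
noncomputable def dimBox {E : Type*} [SeminormedAddCommGroup E] (X : Set E) : EReal :=
  Filter.limsup (fun ε : ℝ => elog (coverNum X ε) / ((-Real.log ε : ℝ) : EReal)) (𝓝[>] 0)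

/-- `thickNum X ε` : smallest dimension of a finite-dimensional subspace `V` with
`dist(x, V) ≤ ε` for all `x ∈ X` (`⊤` if none exists). -/
noncomputable def thickNum {E : Type*} [NormedAddCommGroup E] [NormedSpace ℝ E]
    (X : Set E) (ε : ℝ) : ℕ∞ :=
  sInf {n : ℕ∞ | ∃ V : Submodule ℝ E, FiniteDimensional ℝ V ∧ n = Module.finrank ℝ V ∧
    ∀ x ∈ X, Metric.infDist x (V : Set E) ≤ ε}

/-- The thickness exponent `τ(X) = limsup_{ε → 0⁺} log d(X,ε) / (-log ε)`. -/
noncomputable def thickness {E : Type*} [NormedAddCommGroup E] [NormedSpace ℝ E]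
    (X : Set E) : EReal :=
  Filter.limsup (fun ε : ℝ => elog (thickNum X ε) / ((-Real.log ε : ℝ) : EReal)) (𝓝[>] 0)

/-- `dualThickNum X θ ε` : minimal dimension of a subspace `U ⊆ E*` such that for all
`x, y ∈ X` with `‖x - y‖ ≥ ε` some `φ ∈ U` has `|φ(x-y)| ≥ ε^(1+θ)`. -/
noncomputable def dualThickNum {E : Type*} [NormedAddCommGroup E] [NormedSpace ℝ E]
    (X : Set E) (θ ε : ℝ) : ℕ∞ :=
  sInf {n : ℕ∞ | ∃ U : Submodule ℝ (E →L[ℝ] ℝ), FiniteDimensional ℝ U ∧ n = Module.finrank ℝ U ∧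
    ∀ x ∈ X, ∀ y ∈ X, ε ≤ ‖x - y‖ → ∃ φ ∈ U, ε ^ (1 + θ) ≤ |φ (x - y)|}

noncomputable def dualThickTheta {E : Type*} [NormedAddCommGroup E] [NormedSpace ℝ E]
    (X : Set E) (θ : ℝ) : EReal :=
  Filter.limsup (fun ε : ℝ => elog (dualThickNum X θ ε) / ((-Real.log ε : ℝ) : EReal)) (𝓝[>] 0)

/-- The dual thickness `τ*(X) = lim_{θ → 0⁺} τ*_θ(X)` (the limit exists by monotonicity and
equals the limsup as `θ → 0⁺`). -/
noncomputable def dualThickness {E : Type*} [NormedAddCommGroup E] [NormedSpace ℝ E]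
    (X : Set E) : EReal :=
  Filter.limsup (fun θ : ℝ => dualThickTheta X θ) (𝓝[>] 0)

/-- `sigmaNum X α ε` : minimal dimension of a subspace `V ⊆ E*` such that whenever
`x, y ∈ X` with `‖x - y‖ ≥ ε` there is `Φ ∈ V` with `‖Φ‖ = 1` and `|Φ(x-y)| ≥ α ε`. -/
noncomputable def sigmaNum {E : Type*} [NormedAddCommGroup E] [NormedSpace ℝ E]
    (X : Set E) (α ε : ℝ) : ℕ∞ :=
  sInf {n : ℕ∞ | ∃ V : Submodule ℝ (E →L[ℝ] ℝ), FiniteDimensional ℝ V ∧ n = Module.finrank ℝ V ∧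
    ∀ x ∈ X, ∀ y ∈ X, ε ≤ ‖x - y‖ → ∃ Φ ∈ V, ‖Φ‖ = 1 ∧ α * ε ≤ |Φ (x - y)|}

noncomputable def sigmaExp {E : Type*} [NormedAddCommGroup E] [NormedSpace ℝ E]
    (X : Set E) (α : ℝ) : EReal :=
  Filter.limsup (fun ε : ℝ => elog (sigmaNum X α ε) / ((-Real.log ε : ℝ) : EReal)) (𝓝[>] 0)

section Aux

variable {E : Type*} [NormedAddCommGroup E] [NormedSpace ℝ E]

omit [NormedSpace ℝ E] in
/-- The minimal cover is attained by an actual finset. -/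
lemma exists_finset_card_eq_coverNum {X : Set E} (hX : IsCompact X) {ε : ℝ} (hε : 0 < ε) :
    ∃ F : Finset E, ↑F ⊆ X ∧ (X ⊆ ⋃ c ∈ F, Metric.ball c ε) ∧ (F.card : ℕ∞) = coverNum X ε := by
  classical
  obtain ⟨t, htX, htfin, htcov⟩ := hX.finite_cover_balls hε
  have hcovF : X ⊆ ⋃ c ∈ htfin.toFinset, Metric.ball c ε := by
    refine htcov.trans ?_
    intro z hz
    simp only [Set.mem_iUnion, Set.Finite.mem_toFinset, Finset.mem_coe] at hz ⊢
    exact hz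
  set T : Set ℕ := {k | ∃ F : Finset E, ↑F ⊆ X ∧ (X ⊆ ⋃ c ∈ F, Metric.ball c ε) ∧ k = F.card}
    with hT
  have hTne : T.Nonempty := ⟨htfin.toFinset.card, htfin.toFinset,
    by simpa [Set.Finite.coe_toFinset] using htX, hcovF, rfl⟩
  obtain ⟨F, hF1, hF2, hF3⟩ := Nat.sInf_mem hTne
  refine ⟨F, hF1, hF2, ?_⟩
  apply le_antisymm
  · apply le_sInf
    rintro b ⟨G, hG1, hG2, rfl⟩
    have : sInf T ≤ G.card := Nat.sInf_le ⟨G, hG1, hG2, rfl⟩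
    exact_mod_cast hF3 ▸ this
  · exact sInf_le ⟨F, hF1, hF2, rfl⟩

/-- Construction of the separating map from a cover of `X` at scale `2^{-(n+3)}`. -/
lemma construct_phi {X : Set E} (n : ℕ) (F : Finset E)
    (hcov : X ⊆ ⋃ c ∈ F, Metric.ball c ((2:ℝ) ^ (-((n:ℝ)+3)))) :
    ∃ φ : E →L[ℝ] EuclideanSpace ℝ (Fin ((F ×ˢ F).card)),
      ‖φ‖ ≤ Real.sqrt ((F ×ˢ F).card) ∧
      ∀ x ∈ X, ∀ y ∈ X, (2:ℝ) ^ (-(n:ℝ)) ≤ ‖x - y‖ →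
        (2:ℝ) ^ (-((n:ℝ)+1)) ≤ ‖φ (x - y)‖ := by
  classical
  set m := (F ×ˢ F).card with hm
  set e := (F ×ˢ F).equivFin with he
  set c : Fin m → E := fun i => ((e.symm i) : E × E).1 - ((e.symm i) : E × E).2 with hc
  set g : Fin m → (E →L[ℝ] ℝ) := fun i => Classical.choose (exists_dual_vector'' ℝ (c i)) with hgdef
  have hg1 : ∀ i, ‖g i‖ ≤ 1 := fun i => (Classical.choose_spec (exists_dual_vector'' ℝ (c i))).1
  have hg2 : ∀ i, g i (c i) = ‖c i‖ := fun i => by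
    have := (Classical.choose_spec (exists_dual_vector'' ℝ (c i))).2
    simpa using this
  set L : E →ₗ[ℝ] EuclideanSpace ℝ (Fin m) :=
    { toFun := fun x => WithLp.toLp 2 (fun i => g i x)
      map_add' := by intro x y; ext i; simp
      map_smul' := by intro r x; ext i; simp } with hL
  have hcoord : ∀ (v : EuclideanSpace ℝ (Fin m)) (i : Fin m), |v i| ≤ ‖v‖ := by
    intro v i
    rw [EuclideanSpace.norm_eq]
    have h1 : ‖v i‖^2 ≤ ∑ j, ‖v j‖^2 :=
      Finset.single_le_sum (fun j _ => sq_nonneg ‖v j‖) (Finset.mem_univ i)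
    calc |v i| = Real.sqrt (‖v i‖^2) := by
          rw [Real.sqrt_sq (norm_nonneg _)]; exact (Real.norm_eq_abs _).symm
      _ ≤ _ := Real.sqrt_le_sqrt h1
  have hLbound : ∀ x, ‖L x‖ ≤ Real.sqrt m * ‖x‖ := by
    intro x
    have hnorm : ‖L x‖ = Real.sqrt (∑ i, ‖g i x‖^2) := by
      rw [EuclideanSpace.norm_eq]; rfl
    rw [hnorm]
    have h1 : ∑ i, ‖g i x‖^2 ≤ ∑ _i : Fin m, ‖x‖^2 := by
      refine Finset.sum_le_sum fun i _ => ?_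
      have h2 : ‖g i x‖ ≤ ‖x‖ := by
        calc ‖g i x‖ ≤ ‖g i‖ * ‖x‖ := (g i).le_opNorm x
          _ ≤ 1 * ‖x‖ := by gcongr; exact hg1 i
          _ = ‖x‖ := one_mul _
      exact pow_le_pow_left₀ (norm_nonneg _) h2 2
    have h3 : (∑ _i : Fin m, ‖x‖^2) = (m : ℝ) * ‖x‖^2 := by
      simp [Finset.sum_const, Finset.card_univ]
    calc Real.sqrt (∑ i, ‖g i x‖^2) ≤ Real.sqrt ((m:ℝ) * ‖x‖^2) := by
          apply Real.sqrt_le_sqrt; rw [← h3]; exact h1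
      _ = Real.sqrt m * ‖x‖ := by
          rw [Real.sqrt_mul (Nat.cast_nonneg m), Real.sqrt_sq (norm_nonneg _)]
  refine ⟨L.mkContinuous (Real.sqrt m) hLbound,
    L.mkContinuous_norm_le (Real.sqrt_nonneg _) hLbound, ?_⟩
  intro x hx y hy hxy
  set ε := (2:ℝ) ^ (-((n:ℝ)+3)) with hε
  set a2 := (2:ℝ) ^ (-(n:ℝ)) with ha2
  have hsplit3 : ε = a2 / 8 := by
    rw [hε, ha2, show -((n:ℝ)+3) = -(n:ℝ) + (-3) by ring, Real.rpow_add two_pos,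
      show (-(3:ℝ)) = ((-3:ℤ):ℝ) by norm_num, Real.rpow_intCast]
    norm_num
    ring
  have hsplit1 : (2:ℝ) ^ (-((n:ℝ)+1)) = a2 / 2 := by
    rw [ha2, show -((n:ℝ)+1) = -(n:ℝ) + (-1) by ring, Real.rpow_add two_pos,
      show (-(1:ℝ)) = ((-1:ℤ):ℝ) by norm_num, Real.rpow_intCast]
    norm_num
    ring
  obtain ⟨a, ha, hxa⟩ : ∃ a ∈ F, x ∈ Metric.ball a ε := by
    have := hcov hx
    simpa using this
  obtain ⟨b, hb, hyb⟩ : ∃ b ∈ F, y ∈ Metric.ball b ε := by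
    have := hcov hy
    simpa using this
  set i := e ⟨(a, b), Finset.mem_product.mpr ⟨ha, hb⟩⟩ with hi
  have hci : c i = a - b := by
    rw [hc]; simp [hi]
  have hda : ‖x - a‖ < ε := by rw [← dist_eq_norm]; exact Metric.mem_ball.mp hxa
  have hdb : ‖y - b‖ < ε := by rw [← dist_eq_norm]; exact Metric.mem_ball.mp hyb
  have hw : ‖(x - y) - (a - b)‖ < a2/4 := by
    calc ‖(x - y) - (a - b)‖ = ‖(x - a) - (y - b)‖ := by congr 1; abel
      _ ≤ ‖x - a‖ + ‖y - b‖ := norm_sub_le _ _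
      _ < ε + ε := by gcongr
      _ = a2/4 := by rw [hsplit3]; ring
  have hab : a2 - a2/4 ≤ ‖a - b‖ := by
    have := norm_sub_norm_le (x - y) (a - b)
    linarith
  have habs : |g i ((x - y) - (a - b))| ≤ ‖(x - y) - (a - b)‖ := by
    calc |g i ((x - y) - (a - b))| = ‖g i ((x - y) - (a - b))‖ := (Real.norm_eq_abs _).symm
      _ ≤ ‖g i‖ * ‖(x - y) - (a - b)‖ := (g i).le_opNorm _
      _ ≤ 1 * ‖(x - y) - (a - b)‖ := by gcongr; exact hg1 i
      _ = _ := one_mul _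
  have hfz : a2/2 ≤ g i (x - y) := by
    have e1 : g i (x - y) = g i (a - b) + g i ((x - y) - (a - b)) := by
      rw [← map_add]; congr 1; abel
    have e2 : g i (a - b) = ‖a - b‖ := by rw [← hci]; exact hg2 i
    have e3 := (abs_le.mp habs).1
    rw [e1, e2]
    linarith
  have happ : (L.mkContinuous (Real.sqrt m) hLbound) (x - y) i = g i (x - y) := rfl
  calc (2:ℝ) ^ (-((n:ℝ)+1)) = a2/2 := hsplit1
    _ ≤ g i (x - y) := hfz
    _ ≤ |g i (x - y)| := le_abs_self _
    _ = |(L.mkContinuous (Real.sqrt m) hLbound) (x - y) i| := by rw [happ]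
    _ ≤ ‖(L.mkContinuous (Real.sqrt m) hLbound) (x - y)‖ := hcoord _ _

end Aux

/-- for `d > d_B(X)` there are linear maps `φ_n : B → ℝ^{m_n}`,
`m_n ≤ C 2^{2nd}`, `‖φ_n‖ ≤ √m_n`, with `|φ_n(x - y)| ≥ 2^{-(n+1)}` whenever
`x, y ∈ X` satisfy `‖x - y‖ ≥ 2^{-n}`. -/
theorem exists_finite_rank_separating_maps {B : Type*}
    [NormedAddCommGroup B] [NormedSpace ℝ B] [CompleteSpace B]
    (X : Set B) (hX : IsCompact X) (hfin : dimBox X < ⊤)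
    (d : ℝ) (hd : dimBox X < (d : EReal)) :
    ∃ C > (0 : ℝ), ∀ n : ℕ, ∃ m : ℕ,
      (m : ℝ) ≤ C * (2 : ℝ) ^ (2 * (n : ℝ) * d) ∧
      ∃ φ : B →L[ℝ] EuclideanSpace ℝ (Fin m),
        ‖φ‖ ≤ Real.sqrt m ∧
        ∀ x ∈ X, ∀ y ∈ X, (2 : ℝ) ^ (-(n : ℝ)) ≤ ‖x - y‖ →
          (2 : ℝ) ^ (-((n : ℝ) + 1)) ≤ ‖φ (x - y)‖ := by
  classical
  obtain ⟨d', hd'1, hd'2⟩ := EReal.exists_between_coe_real hd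
  have hd'd : d' < d := by exact_mod_cast hd'2
  have hev : ∀ᶠ ε in 𝓝[>] (0:ℝ),
      elog (coverNum X ε) / ((-Real.log ε : ℝ) : EReal) < (d' : EReal) :=
    Filter.eventually_lt_of_limsup_lt hd'1
  have hev2 : ∀ᶠ ε in 𝓝[>] (0:ℝ), ε < (1:ℝ) :=
    eventually_nhdsWithin_of_eventually_nhds (eventually_lt_nhds one_pos)
  obtain ⟨ε₀, hε₀mem, hsub⟩ := mem_nhdsGT_iff_exists_Ioo_subset.mp (hev.and hev2)
  have hε₀pos : (0:ℝ) < ε₀ := hε₀mem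
  have key : ∀ ε : ℝ, 0 < ε → ε < ε₀ →
      ∃ F : Finset B, ↑F ⊆ X ∧ (X ⊆ ⋃ c ∈ F, Metric.ball c ε) ∧ (F.card : ℝ) ≤ ε ^ (-d') := by
    intro ε hε1 hε2
    obtain ⟨hlt, hε3⟩ := hsub ⟨hε1, hε2⟩
    obtain ⟨F, hF1, hF2, hF3⟩ := exists_finset_card_eq_coverNum hX hε1
    refine ⟨F, hF1, hF2, ?_⟩
    have hb : (0:ℝ) < -Real.log ε := by
      have := Real.log_neg hε1 hε3
      linarith
    rw [← hF3] at hlt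
    have helog : elog ((F.card : ℕ∞)) = ((Real.log F.card : ℝ) : EReal) := by
      simp [elog]
    rw [helog] at hlt
    have hstep : ((Real.log F.card : ℝ) : EReal) < ((d' * (-Real.log ε) : ℝ) : EReal) := by
      by_contra hcon
      push_neg at hcon
      have hle : (d' : EReal) ≤ ((Real.log F.card : ℝ) : EReal) / ((-Real.log ε : ℝ) : EReal) := by
        rw [EReal.le_div_iff_mul_le (by exact_mod_cast hb) (EReal.coe_ne_top _)]
        calc (d' : EReal) * ((-Real.log ε : ℝ):EReal)
            = ((d' * (-Real.log ε) : ℝ) : EReal) := by rw [EReal.coe_mul]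
          _ ≤ _ := hcon
      exact absurd hlt (not_lt.mpr hle)
    have hlog : Real.log F.card < d' * (-Real.log ε) := by exact_mod_cast hstep
    rcases Nat.eq_zero_or_pos F.card with h0 | hpos
    · rw [h0]
      push_cast
      positivity
    · have h1 : (F.card : ℝ) = Real.exp (Real.log F.card) := by
        rw [Real.exp_log]
        exact_mod_cast hpos
      rw [h1, Real.rpow_def_of_pos hε1]
      have h2 : Real.log ε * (-d') = d' * (-Real.log ε) := by ring
      rw [h2]
      exact (Real.exp_lt_exp.mpr hlog).le
  obtain ⟨N₀, hN₀⟩ := exists_pow_lt_of_lt_one hε₀pos (by norm_num : (1:ℝ)/2 < 1)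
  have hscale : ∀ n : ℕ, N₀ ≤ n → (2:ℝ) ^ (-((n:ℝ)+3)) < ε₀ := by
    intro n hn
    have hcast : (N₀:ℝ) ≤ (n:ℝ) := Nat.cast_le.mpr hn
    have h1 : (2:ℝ) ^ (-((n:ℝ)+3)) ≤ (2:ℝ) ^ (-(N₀:ℝ)) := by
      apply Real.rpow_le_rpow_of_exponent_le one_le_two
      linarith
    have h2 : (2:ℝ) ^ (-(N₀:ℝ)) = ((1:ℝ)/2) ^ N₀ := by
      rw [Real.rpow_neg (by norm_num), Real.rpow_natCast]
      simp [one_div, inv_pow]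
    rw [h2] at h1
    linarith
  have hQ : ∀ n : ℕ, ∃ F : Finset B, ↑F ⊆ X ∧
      (X ⊆ ⋃ c ∈ F, Metric.ball c ((2:ℝ) ^ (-((n:ℝ)+3)))) ∧
      (N₀ ≤ n → (F.card : ℝ) ≤ (2:ℝ) ^ (((n:ℝ)+3) * d')) := by
    intro n
    have hpos : (0:ℝ) < (2:ℝ) ^ (-((n:ℝ)+3)) := Real.rpow_pos_of_pos two_pos _
    by_cases hn : N₀ ≤ n
    · obtain ⟨F, h1, h2, h3⟩ := key _ hpos (hscale n hn)
      refine ⟨F, h1, h2, fun _ => ?_⟩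
      calc (F.card:ℝ) ≤ ((2:ℝ) ^ (-((n:ℝ)+3))) ^ (-d') := h3
        _ = (2:ℝ) ^ (((n:ℝ)+3) * d') := by
            rw [← Real.rpow_mul (by norm_num : (0:ℝ) ≤ 2)]
            congr 1
            ring
    · obtain ⟨F, h1, h2, _⟩ := exists_finset_card_eq_coverNum hX hpos
      exact ⟨F, h1, h2, fun h => absurd h hn⟩
  set FF : ℕ → Finset B := fun n => (hQ n).choose with hFF
  have hFF2 : ∀ n, X ⊆ ⋃ c ∈ FF n, Metric.ball c ((2:ℝ) ^ (-((n:ℝ)+3))) :=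
    fun n => (hQ n).choose_spec.2.1
  have hFF3 : ∀ n, N₀ ≤ n → ((FF n).card : ℝ) ≤ (2:ℝ) ^ (((n:ℝ)+3) * d') :=
    fun n => (hQ n).choose_spec.2.2
  set C : ℝ := (2:ℝ) ^ (6 * d') +
      ∑ k ∈ Finset.range N₀,
        (((FF k).card : ℝ) * ((FF k).card : ℝ)) * ((2:ℝ) ^ (2*(k:ℝ)*d))⁻¹ with hC
  have hsumnn : (0:ℝ) ≤ ∑ k ∈ Finset.range N₀,
      (((FF k).card : ℝ) * ((FF k).card : ℝ)) * ((2:ℝ) ^ (2*(k:ℝ)*d))⁻¹ :=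
    Finset.sum_nonneg fun k _ => by positivity
  have hCpos : 0 < C := by
    rw [hC]
    have := Real.rpow_pos_of_pos (two_pos (α := ℝ)) (6 * d')
    linarith
  refine ⟨C, hCpos, fun n => ?_⟩
  refine ⟨(FF n ×ˢ FF n).card, ?_, ?_⟩
  · have hcard : ((FF n ×ˢ FF n).card : ℝ) = ((FF n).card : ℝ) * ((FF n).card : ℝ) := by
      rw [Finset.card_product]
      push_cast
      ring
    have h2nd : (0:ℝ) < (2:ℝ) ^ (2*(n:ℝ)*d) := Real.rpow_pos_of_pos two_pos _
    rw [hcard]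
    by_cases hn : N₀ ≤ n
    · have h1 := hFF3 n hn
      have hcnonneg : (0:ℝ) ≤ ((FF n).card : ℝ) := Nat.cast_nonneg _
      have h3 : ((FF n).card : ℝ) * ((FF n).card : ℝ)
          ≤ (2:ℝ)^(((n:ℝ)+3)*d') * (2:ℝ)^(((n:ℝ)+3)*d') :=
        mul_le_mul h1 h1 hcnonneg (Real.rpow_pos_of_pos two_pos _).le
      have h4 : (2:ℝ)^(((n:ℝ)+3)*d') * (2:ℝ)^(((n:ℝ)+3)*d')
          = (2:ℝ)^(6*d') * (2:ℝ)^(2*(n:ℝ)*d') := by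
        rw [← Real.rpow_add two_pos, ← Real.rpow_add two_pos]
        congr 1
        ring
      have h5 : (2:ℝ)^(2*(n:ℝ)*d') ≤ (2:ℝ)^(2*(n:ℝ)*d) := by
        apply Real.rpow_le_rpow_of_exponent_le one_le_two
        have hnn : (0:ℝ) ≤ 2*(n:ℝ) := by positivity
        nlinarith
      have h6 : (2:ℝ)^(6*d') ≤ C := by
        rw [hC]
        linarith
      calc ((FF n).card : ℝ) * ((FF n).card : ℝ)
          ≤ (2:ℝ)^(6*d') * (2:ℝ)^(2*(n:ℝ)*d') := by rw [← h4]; exact h3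
        _ ≤ (2:ℝ)^(6*d') * (2:ℝ)^(2*(n:ℝ)*d) := by
            exact mul_le_mul_of_nonneg_left h5 (Real.rpow_pos_of_pos two_pos _).le
        _ ≤ C * (2:ℝ)^(2*(n:ℝ)*d) := mul_le_mul_of_nonneg_right h6 h2nd.le
    · push_neg at hn
      have hterm : (((FF n).card:ℝ) * ((FF n).card:ℝ)) * ((2:ℝ)^(2*(n:ℝ)*d))⁻¹ ≤ C := by
        rw [hC]
        have hs := Finset.single_le_sum
          (f := fun k => (((FF k).card:ℝ) * ((FF k).card:ℝ)) * ((2:ℝ)^(2*(k:ℝ)*d))⁻¹)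
          (fun k _ => by positivity) (Finset.mem_range.mpr hn)
        have := Real.rpow_pos_of_pos (two_pos (α := ℝ)) (6 * d')
        linarith
      calc ((FF n).card:ℝ) * ((FF n).card:ℝ)
          = ((((FF n).card:ℝ) * ((FF n).card:ℝ)) * ((2:ℝ)^(2*(n:ℝ)*d))⁻¹) * (2:ℝ)^(2*(n:ℝ)*d) := by
            field_simp
        _ ≤ C * (2:ℝ)^(2*(n:ℝ)*d) := mul_le_mul_of_nonneg_right hterm h2nd.le
  · exact construct_phi n (FF n) (hFF2 n)
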